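/- For every natural number n, the centered period-6 alternating window sum of row 2n of Pascal's triangle with offset 2 equals the ceiling of 3^n/2: Σ_{k∈ℤ} [ C(2n, n + 6k) − C(2n, n + 2 + 6k) ] = (3^n + 1)/2. -/

import Mathlib

def zchoose (r : ℕ) (j : ℤ) : ℤ := if 0 ≤ j then (r.choose j.toNat : ℤ) else 0

lemma zchoose_eq_zero {r : ℕ} {j : ℤ} (h : j < 0 ∨ (r : ℤ) < j) : zchoose r j = 0 := by
  rcases h with h | h
  · simp [zchoose, not_le.2 h]
  · have h0 : 0 ≤ j := le_trans (Int.natCast_nonneg r) h.le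
    have : r < j.toNat := by omega
    simp [zchoose, h0, Nat.choose_eq_zero_of_lt this]

lemma zchoose_ne_zero {r : ℕ} {j : ℤ} (h : zchoose r j ≠ 0) : 0 ≤ j ∧ j ≤ (r : ℤ) := by
  by_contra hc
  exact h (zchoose_eq_zero (by omega))

lemma zchoose_pascal (r : ℕ) (j : ℤ) :
    zchoose (r + 1) j = zchoose r (j - 1) + zchoose r j := by
  unfold zchoose
  rcases lt_trichotomy j 0 with h | h | h
  · simp only [if_neg (not_le.2 h), if_neg (not_le.2 (by omega : j - 1 < 0))]; simp
  · subst h; simp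
  · have h1 : (0:ℤ) ≤ j - 1 := by omega
    have h0 : (0:ℤ) ≤ j := by omega
    simp only [if_pos h1, if_pos h0]
    have ht : j.toNat = (j - 1).toNat + 1 := by omega
    rw [ht, Nat.choose_succ_succ]
    push_cast
    ring

lemma zchoose_symm (r : ℕ) (j : ℤ) : zchoose r j = zchoose r (r - j) := by
  rcases lt_trichotomy j 0 with h | h | h
  · rw [zchoose_eq_zero (Or.inl h), zchoose_eq_zero (Or.inr (by omega))]
  · subst h; simp [zchoose, Int.toNat_natCast]
  · by_cases hr : j ≤ (r : ℤ)
    · have h1 : (0:ℤ) ≤ r - j := by omega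
      simp only [zchoose, if_pos h.le, if_pos h1]
      have : ((r:ℤ) - j).toNat = r - j.toNat := by omega
      rw [this, Nat.choose_symm (show j.toNat ≤ r by omega)]
    · rw [zchoose_eq_zero (Or.inr (by omega)), zchoose_eq_zero (Or.inl (by omega))]

noncomputable def B (r : ℕ) (t : ℤ) : ℤ := ∑ᶠ k : ℤ, zchoose r (t + 6 * k)

lemma B_fin (r : ℕ) (t : ℤ) :
    (Function.support fun k : ℤ => zchoose r (t + 6 * k)).Finite := by
  apply Set.Finite.subset (Set.finite_Icc (-(t.natAbs + r : ℤ)) (t.natAbs + r))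
  intro k hk
  have := zchoose_ne_zero hk
  simp only [Set.mem_Icc]
  omega

lemma B_pascal (r : ℕ) (t : ℤ) : B (r + 1) t = B r (t - 1) + B r t := by
  have : B (r + 1) t = ∑ᶠ k : ℤ, (zchoose r (t - 1 + 6 * k) + zchoose r (t + 6 * k)) := by
    unfold B
    congr 1
    funext k
    rw [zchoose_pascal]
    ring_nf
  rw [this, finsum_add_distrib (B_fin r (t - 1)) (B_fin r t)]; rfl

lemma B_shift (r : ℕ) (t : ℤ) : B r (t + 6) = B r t := by
  unfold B
  rw [← finsum_comp_equiv (Equiv.addRight (1 : ℤ)) (f := fun k => zchoose r (t + 6 * k))]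
  congr 1
  funext k
  simp only [Equiv.coe_addRight]
  ring_nf

lemma B_symm (n : ℕ) (t : ℤ) : B (2 * n) ((n : ℤ) + t) = B (2 * n) ((n : ℤ) - t) := by
  unfold B
  rw [← finsum_comp_equiv (Equiv.neg ℤ) (f := fun k => zchoose (2*n) ((n:ℤ) - t + 6 * k))]
  congr 1
  funext k
  simp only [Equiv.neg_apply]
  rw [zchoose_symm]
  congr 1
  push_cast
  ring

lemma B_pascal2 (n : ℕ) (t : ℤ) :
    B (2 * (n + 1)) t = B (2 * n) (t - 2) + 2 * B (2 * n) (t - 1) + B (2 * n) t := by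
  have h : 2 * (n + 1) = (2 * n + 1) + 1 := by ring
  rw [h, B_pascal, B_pascal, B_pascal]
  have h2 : t - 1 - 1 = t - 2 := by ring
  rw [h2]; ring

lemma key (n : ℕ) :
    2 * (B (2 * n) n - B (2 * n) ((n : ℤ) + 2)) = 3 ^ n + 1 ∧
    2 * (B (2 * n) ((n : ℤ) + 1) - B (2 * n) ((n : ℤ) + 3)) = 3 ^ n - 1 := by
  induction n with
  | zero =>
    have h0 : ∀ t : ℤ, 0 ≤ t → t ≤ 3 → B 0 t = zchoose 0 t := by
      intro t h1 h2
      unfold B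
      have := finsum_eq_single (fun k : ℤ => zchoose 0 (t + 6 * k)) 0
        (fun k hk => zchoose_eq_zero (by simp only [Nat.cast_zero]; omega))
      simpa using this
    have e0 : B 0 0 = 1 := by rw [h0 0 (by norm_num) (by norm_num)]; simp [zchoose]
    have e1 : B 0 1 = 0 := by
      rw [h0 1 (by norm_num) (by norm_num)]; exact zchoose_eq_zero (Or.inr (by norm_num))
    have e2 : B 0 2 = 0 := by
      rw [h0 2 (by norm_num) (by norm_num)]; exact zchoose_eq_zero (Or.inr (by norm_num))
    have e3 : B 0 3 = 0 := by
      rw [h0 3 (by norm_num) (by norm_num)]; exact zchoose_eq_zero (Or.inr (by norm_num))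
    norm_num [e0, e1, e2, e3]
  | succ n ih =>
    obtain ⟨ih1, ih2⟩ := ih
    have s1 : B (2 * n) ((n : ℤ) - 1) = B (2 * n) ((n : ℤ) + 1) := (B_symm n 1).symm
    have s2 : B (2 * n) ((n : ℤ) + 4) = B (2 * n) ((n : ℤ) + 2) := by
      have h4 := B_symm n 4
      have h6 := B_shift (2 * n) ((n : ℤ) - 4)
      have he : (n : ℤ) - 4 + 6 = (n : ℤ) + 2 := by ring
      rw [he] at h6
      rw [h4, ← h6]
    have p1 : B (2 * (n + 1)) ((n : ℤ) + 1) =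
        B (2 * n) ((n : ℤ) - 1) + 2 * B (2 * n) ((n : ℤ)) + B (2 * n) ((n : ℤ) + 1) := by
      rw [B_pascal2]; ring_nf
    have p2 : B (2 * (n + 1)) ((n : ℤ) + 3) =
        B (2 * n) ((n : ℤ) + 1) + 2 * B (2 * n) ((n : ℤ) + 2) + B (2 * n) ((n : ℤ) + 3) := by
      rw [B_pascal2]; ring_nf
    have p3 : B (2 * (n + 1)) ((n : ℤ) + 2) =
        B (2 * n) ((n : ℤ)) + 2 * B (2 * n) ((n : ℤ) + 1) + B (2 * n) ((n : ℤ) + 2) := by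
      rw [B_pascal2]; ring_nf
    have p4 : B (2 * (n + 1)) ((n : ℤ) + 4) =
        B (2 * n) ((n : ℤ) + 2) + 2 * B (2 * n) ((n : ℤ) + 3) + B (2 * n) ((n : ℤ) + 4) := by
      rw [B_pascal2]; ring_nf
    have hc : ((n : ℤ) + 1) = ((n + 1 : ℕ) : ℤ) := by push_cast; ring
    have hp : (3 : ℤ) ^ (n + 1) = 3 * 3 ^ n := by ring
    constructor
    · have e : (n : ℤ) + 1 + 2 = (n : ℤ) + 3 := by ring
      push_cast
      rw [e, p1, p2, s1, hp]
      linarith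
    · have e1 : (n : ℤ) + 1 + 1 = (n : ℤ) + 2 := by ring
      have e3 : (n : ℤ) + 1 + 3 = (n : ℤ) + 4 := by ring
      push_cast
      rw [e1, e3, p3, p4, s2, hp]
      linarith

/-- The centered period-6 alternating window sum of row 2n of Pascal's triangle with
offset 2 equals ⌈3^n / 2⌉ = (3^n + 1)/2. -/
theorem period_six_window_sum_offset_two (n : ℕ) :
    ∑ᶠ k : ℤ, (zchoose (2 * n) (n + 6 * k) - zchoose (2 * n) (n + 2 + 6 * k)) =
      (3 ^ n + 1) / 2 := by
  have hsub : ∑ᶠ k : ℤ, (zchoose (2 * n) (n + 6 * k) - zchoose (2 * n) ((n : ℤ) + 2 + 6 * k)) =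
      B (2 * n) n - B (2 * n) ((n : ℤ) + 2) :=
    finsum_sub_distrib (B_fin (2 * n) n) (B_fin (2 * n) ((n : ℤ) + 2))
  rw [hsub]
  have h2 := (key n).1
  set m := (3 : ℤ) ^ n with hm
  omega
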